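/- Let f, s : ℤ → ℝ be positive sequences, ε_f ≥ 0 and ε_σ ≥ 0, and suppose |f(t+1) − f(t)| ≤ ε_f·f(t) and |s(t+1) − s(t)| ≤ ε_σ·s(t) for all t ∈ ℤ. Let μ > 0, let n : ℤ → ℝ be positive, fix t ∈ ℤ and an integer w ≥ 1 with w·ε_f < 1 and w·ε_σ < 1, and set n_w = Σ_{i=−w}^{w} n(t+i), m_w = Σ_{i=−w}^{w} (n(t+i)/n_w)·μ·f(t+i), and v_w = Σ_{i=−w}^{w} (n(t+i)/n_w²)·s(t+i). Assume (1 + w·ε_σ/(1 − w·ε_σ))·√(n(t)/n_w) < 1. Then for every λ ≥ (w·ε_f/(1 − w·ε_f)) / (1 − (1 + w·ε_σ/(1 − w·ε_σ))·√(n(t)/n_w)): N(m_w, v_w)({x ∈ ℝ : |x/μ − f(t)| ≥ λ·f(t)}) ≤ N(μ·f(t), s(t)/n(t))({x ∈ ℝ : |x/μ − f(t)| ≥ λ·f(t)}). -/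

import Mathlib

open MeasureTheory ProbabilityTheory
open scoped NNReal

lemma gaussian_tail_std (m a : ℝ) (v : ℝ) (hv : 0 < v) :
    gaussianReal m v.toNNReal {x | a ≤ |x - m|}
      = gaussianReal 0 1 {y | a / Real.sqrt v ≤ |y|} := by
  set σ := Real.sqrt v with hσdef
  have hσ : 0 < σ := Real.sqrt_pos.2 hv
  have hset : MeasurableSet {x : ℝ | a ≤ |x - m|} :=
    measurableSet_le measurable_const ((measurable_id.sub_const m).abs)
  have hset2 : MeasurableSet ((· + m) ⁻¹' {x : ℝ | a ≤ |x - m|}) :=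
    hset.preimage (measurable_id.add_const m)
  have hmap : ((gaussianReal 0 1).map (σ * ·)).map (· + m) = gaussianReal m v.toNNReal := by
    rw [gaussianReal_map_const_mul, gaussianReal_map_add_const]
    congr 1
    · ring
    · rw [mul_one]
      ext
      simp [hσdef, Real.sq_sqrt hv.le, Real.coe_toNNReal _ hv.le]
  rw [← hmap, Measure.map_apply (f := fun x => x + m) (by fun_prop) hset,
    Measure.map_apply (f := fun x => σ * x) (by fun_prop) hset2]
  congr 1
  ext y
  simp only [Set.mem_preimage, Set.mem_setOf_eq, add_sub_cancel_right]
  rw [abs_mul, abs_of_pos hσ, div_le_iff₀ hσ]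
  constructor <;> intro h <;> linarith [mul_comm σ |y|]

lemma gaussian_tail_comp (m₁ m₂ v₁ v₂ r : ℝ) (hv₁ : 0 < v₁) (hv₂ : 0 < v₂)
    (h : r / Real.sqrt v₂ ≤ (r - |m₁ - m₂|) / Real.sqrt v₁) :
    gaussianReal m₁ v₁.toNNReal {x | r ≤ |x - m₂|}
      ≤ gaussianReal m₂ v₂.toNNReal {x | r ≤ |x - m₂|} := by
  calc gaussianReal m₁ v₁.toNNReal {x | r ≤ |x - m₂|}
      ≤ gaussianReal m₁ v₁.toNNReal {x | r - |m₁ - m₂| ≤ |x - m₁|} := by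
        refine measure_mono fun x hx => ?_
        simp only [Set.mem_setOf_eq] at hx ⊢
        have h2 : |x - m₂| ≤ |x - m₁| + |m₁ - m₂| := abs_sub_le x m₁ m₂
        linarith
    _ = gaussianReal 0 1 {y | (r - |m₁ - m₂|) / Real.sqrt v₁ ≤ |y|} :=
        gaussian_tail_std m₁ _ v₁ hv₁
    _ ≤ gaussianReal 0 1 {y | r / Real.sqrt v₂ ≤ |y|} :=
        measure_mono fun y hy => le_trans h hy
    _ = gaussianReal m₂ v₂.toNNReal {x | r ≤ |x - m₂|} :=
        (gaussian_tail_std m₂ r v₂ hv₂).symm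

lemma seq_ratio_bound (g : ℤ → ℝ) (hg : ∀ u, 0 < g u) (ε : ℝ) (hε : 0 ≤ ε) (hε1 : ε < 1)
    (hd : ∀ u, |g (u + 1) - g u| ≤ ε * g u) (w : ℕ) (hwε : (w : ℝ) * ε < 1) (t : ℤ) :
    ∀ i : ℤ, |i| ≤ (w : ℤ) →
      (1 - (w : ℝ) * ε) * g t ≤ g (t + i) ∧ g (t + i) ≤ g t / (1 - (w : ℝ) * ε) := by
  have h1ε : (0:ℝ) < 1 - ε := by linarith
  have fwd1 : ∀ u, (1 - ε) * g u ≤ g (u + 1) ∧ g (u + 1) ≤ g u / (1 - ε) := by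
    intro u
    have h := abs_le.1 (hd u)
    constructor
    · nlinarith [hg u, hg (u + 1)]
    · rw [le_div_iff₀ h1ε]
      nlinarith [hg u, hg (u + 1)]
  have bwd1 : ∀ u, (1 - ε) * g u ≤ g (u - 1) ∧ g (u - 1) ≤ g u / (1 - ε) := by
    intro u
    have h := abs_le.1 (hd (u - 1))
    rw [sub_add_cancel] at h
    constructor
    · nlinarith [hg u, hg (u - 1)]
    · rw [le_div_iff₀ h1ε]
      nlinarith [hg u, hg (u - 1)]
  have fwd : ∀ k : ℕ, (1 - ε) ^ k * g t ≤ g (t + k) ∧ g (t + k) ≤ g t / (1 - ε) ^ k := by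
    intro k
    induction k with
    | zero => simp
    | succ k ih =>
      have heq : t + ((k : ℤ) + 1) = (t + k) + 1 := by ring
      push_cast
      rw [heq]
      obtain ⟨ih1, ih2⟩ := ih
      obtain ⟨s1, s2⟩ := fwd1 (t + k)
      constructor
      · calc (1 - ε) ^ (k + 1) * g t = (1 - ε) * ((1 - ε) ^ k * g t) := by ring
          _ ≤ (1 - ε) * g (t + k) := by nlinarith
          _ ≤ g (t + k + 1) := s1
      · calc g (t + k + 1) ≤ g (t + k) / (1 - ε) := s2
          _ ≤ (g t / (1 - ε) ^ k) / (1 - ε) := by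
              apply div_le_div_of_nonneg_right ih2 h1ε.le
          _ = g t / (1 - ε) ^ (k + 1) := by rw [div_div, pow_succ]
  have bwd : ∀ k : ℕ, (1 - ε) ^ k * g t ≤ g (t - k) ∧ g (t - k) ≤ g t / (1 - ε) ^ k := by
    intro k
    induction k with
    | zero => simp
    | succ k ih =>
      have heq : t - ((k : ℤ) + 1) = (t - k) - 1 := by ring
      push_cast
      rw [heq]
      obtain ⟨ih1, ih2⟩ := ih
      obtain ⟨s1, s2⟩ := bwd1 (t - k)
      constructor
      · calc (1 - ε) ^ (k + 1) * g t = (1 - ε) * ((1 - ε) ^ k * g t) := by ring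
          _ ≤ (1 - ε) * g (t - k) := by nlinarith
          _ ≤ g (t - k - 1) := s1
      · calc g (t - k - 1) ≤ g (t - k) / (1 - ε) := s2
          _ ≤ (g t / (1 - ε) ^ k) / (1 - ε) := by
              apply div_le_div_of_nonneg_right ih2 h1ε.le
          _ = g t / (1 - ε) ^ (k + 1) := by rw [div_div, pow_succ]
  intro i hi
  set k := i.natAbs with hk
  have hkw : k ≤ w := by
    have : (i.natAbs : ℤ) ≤ (w : ℤ) := by rwa [Int.abs_eq_natAbs] at hi
    exact_mod_cast this
  have hbounds : (1 - ε) ^ k * g t ≤ g (t + i) ∧ g (t + i) ≤ g t / (1 - ε) ^ k := by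
    rcases Int.natAbs_eq i with h | h
    · rw [show t + i = t + (k : ℤ) by rw [hk, ← h]]
      exact fwd k
    · rw [show t + i = t - (k : ℤ) by rw [hk]; omega]
      exact bwd k
  have hpow : 1 - (w : ℝ) * ε ≤ (1 - ε) ^ k := by
    calc 1 - (w : ℝ) * ε = 1 + (w : ℝ) * (-ε) := by ring
      _ ≤ (1 + (-ε)) ^ w := one_add_mul_le_pow (by linarith) w
      _ = (1 - ε) ^ w := by ring_nf
      _ ≤ (1 - ε) ^ k := pow_le_pow_of_le_one h1ε.le (by linarith) hkw
  have hwε0 : (0:ℝ) < 1 - (w : ℝ) * ε := by linarith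
  constructor
  · calc (1 - (w : ℝ) * ε) * g t ≤ (1 - ε) ^ k * g t := by nlinarith [hg t]
      _ ≤ g (t + i) := hbounds.1
  · calc g (t + i) ≤ g t / (1 - ε) ^ k := hbounds.2
      _ ≤ g t / (1 - (w : ℝ) * ε) := by
          apply div_le_div_of_nonneg_left (hg t).le hwε0 hpow

set_option maxHeartbeats 1000000 in
/-- Paper Theorem 7: the weighted moving average of the responses is a better
estimator than the raw response, for the Gaussian approximations furnished by
the CLT. -/
theorem weighted_moving_average_better (f s : ℤ → ℝ)
    (hf : ∀ t, 0 < f t) (hs : ∀ t, 0 < s t)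
    (εf εσ : ℝ) (hεf : 0 ≤ εf) (hεσ : 0 ≤ εσ)
    (hdf : ∀ t : ℤ, |f (t + 1) - f t| ≤ εf * f t)
    (hds : ∀ t : ℤ, |s (t + 1) - s t| ≤ εσ * s t)
    (μ : ℝ) (hμ : 0 < μ) (n : ℤ → ℝ) (hn : ∀ t, 0 < n t)
    (t : ℤ) (w : ℕ) (hw : 1 ≤ w)
    (hwεf : (w : ℝ) * εf < 1) (hwεσ : (w : ℝ) * εσ < 1)
    (nw mw vw : ℝ)
    (hnw : nw = ∑ i ∈ Finset.Icc (-(w : ℤ)) (w : ℤ), n (t + i))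
    (hmw : mw = ∑ i ∈ Finset.Icc (-(w : ℤ)) (w : ℤ), (n (t + i) / nw) * (μ * f (t + i)))
    (hvw : vw = ∑ i ∈ Finset.Icc (-(w : ℤ)) (w : ℤ), (n (t + i) / nw ^ 2) * s (t + i))
    (hratio : (1 + (w : ℝ) * εσ / (1 - (w : ℝ) * εσ)) * Real.sqrt (n t / nw) < 1) :
    ∀ lam : ℝ,
      ((w : ℝ) * εf / (1 - (w : ℝ) * εf)) /
          (1 - (1 + (w : ℝ) * εσ / (1 - (w : ℝ) * εσ)) * Real.sqrt (n t / nw)) ≤ lam →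
      gaussianReal mw vw.toNNReal {x : ℝ | |x / μ - f t| ≥ lam * f t} ≤
      gaussianReal (μ * f t) ((s t / n t).toNNReal)
        {x : ℝ | |x / μ - f t| ≥ lam * f t} := by
  intro lam hlam
  set I := Finset.Icc (-(w : ℤ)) (w : ℤ) with hI
  have hw1 : (1 : ℝ) ≤ (w : ℝ) := by exact_mod_cast hw
  set A := (w : ℝ) * εf with hA
  set B := (w : ℝ) * εσ with hB
  have hA0 : 0 ≤ A := by positivity
  have hB0 : 0 ≤ B := by positivity
  have h1A : (0:ℝ) < 1 - A := by linarith
  have h1B : (0:ℝ) < 1 - B := by linarith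
  have hεf1 : εf < 1 := by
    have := le_mul_of_one_le_left hεf hw1
    linarith
  have hεσ1 : εσ < 1 := by
    have := le_mul_of_one_le_left hεσ hw1
    linarith
  have h0I : (0 : ℤ) ∈ I := by rw [hI, Finset.mem_Icc]; omega
  have hnw0 : 0 < nw := by
    rw [hnw]; exact Finset.sum_pos (fun i _ => hn _) ⟨0, h0I⟩
  -- bounds on f and s
  have hfb := seq_ratio_bound f hf εf hεf hεf1 hdf w hwεf t
  have hsb := seq_ratio_bound s hs εσ hεσ hεσ1 hds w hwεσ t
  have hmemI : ∀ i : ℤ, i ∈ I → |i| ≤ (w : ℤ) := by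
    intro i hi
    rw [hI, Finset.mem_Icc] at hi
    rw [abs_le]; exact hi
  set ρf := A / (1 - A) with hρf
  have hρf0 : 0 ≤ ρf := div_nonneg hA0 h1A.le
  -- pointwise f deviation bound
  have hfdev : ∀ i ∈ I, |f (t + i) - f t| ≤ ρf * f t := by
    intro i hi
    obtain ⟨hlo, hhi⟩ := hfb i (hmemI i hi)
    have hub : f (t + i) * (1 - A) ≤ f t := (le_div_iff₀ h1A).1 hhi
    rw [abs_le]
    constructor
    · have hρA : A ≤ ρf := by
        rw [hρf, le_div_iff₀ h1A]; nlinarith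
      nlinarith [hf t, mul_le_mul_of_nonneg_right hρA (hf t).le]
    · have : f t / (1 - A) - f t = ρf * f t := by
        rw [hρf]; field_simp; ring
      linarith
  -- sum of weights is 1
  have hsum1 : ∑ i ∈ I, n (t + i) / nw = 1 := by
    rw [← Finset.sum_div, ← hnw, div_self hnw0.ne']
  -- mean deviation bound
  have hmw' : mw - μ * f t = ∑ i ∈ I, (n (t + i) / nw) * (μ * (f (t + i) - f t)) := by
    calc mw - μ * f t = (∑ i ∈ I, (n (t + i) / nw) * (μ * f (t + i)))
          - (∑ i ∈ I, n (t + i) / nw) * (μ * f t) := by rw [hmw, hsum1, one_mul]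
      _ = ∑ i ∈ I, ((n (t + i) / nw) * (μ * f (t + i)) - (n (t + i) / nw) * (μ * f t)) := by
          rw [Finset.sum_mul, ← Finset.sum_sub_distrib]
      _ = ∑ i ∈ I, (n (t + i) / nw) * (μ * (f (t + i) - f t)) := by
          refine Finset.sum_congr rfl fun i _ => by ring
  have hm : |mw - μ * f t| ≤ ρf * (μ * f t) := by
    rw [hmw']
    calc |∑ i ∈ I, (n (t + i) / nw) * (μ * (f (t + i) - f t))|
        ≤ ∑ i ∈ I, |(n (t + i) / nw) * (μ * (f (t + i) - f t))| :=
          Finset.abs_sum_le_sum_abs _ _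
      _ ≤ ∑ i ∈ I, (n (t + i) / nw) * (μ * (ρf * f t)) := by
          refine Finset.sum_le_sum fun i hi => ?_
          have hnn : (0:ℝ) ≤ n (t + i) / nw := div_nonneg (hn _).le hnw0.le
          rw [abs_mul, abs_mul, abs_of_nonneg hnn, abs_of_pos hμ]
          exact mul_le_mul_of_nonneg_left
            (mul_le_mul_of_nonneg_left (hfdev i hi) hμ.le) hnn
      _ = ρf * (μ * f t) := by
          rw [← Finset.sum_mul, hsum1, one_mul]; ring
  -- variance bound
  have hvub : vw ≤ s t / ((1 - B) * nw) := by
    rw [hvw]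
    calc ∑ i ∈ I, (n (t + i) / nw ^ 2) * s (t + i)
        ≤ ∑ i ∈ I, (n (t + i) / nw ^ 2) * (s t / (1 - B)) := by
          refine Finset.sum_le_sum fun i hi => ?_
          exact mul_le_mul_of_nonneg_left (hsb i (hmemI i hi)).2
            (div_nonneg (hn _).le (by positivity))
      _ = s t / ((1 - B) * nw) := by
          rw [← Finset.sum_mul, ← Finset.sum_div, ← hnw]
          rw [pow_two, div_mul_div_comm]
          rw [div_eq_div_iff (mul_pos (mul_pos hnw0 hnw0) h1B).ne'
            (mul_pos h1B hnw0).ne']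
          ring
  have hvw0 : 0 < vw := by
    rw [hvw]
    exact Finset.sum_pos
      (fun i _ => mul_pos (div_pos (hn _) (by positivity)) (hs _)) ⟨0, h0I⟩
  have hst0 : 0 < s t / n t := div_pos (hs t) (hn t)
  -- the contraction factor c
  set c := (1 + B / (1 - B)) * Real.sqrt (n t / nw) with hc
  have hcB : 1 + B / (1 - B) = 1 / (1 - B) := by field_simp; ring
  have hc0 : 0 < c := by
    apply mul_pos
    · have : 0 ≤ B / (1 - B) := div_nonneg hB0 h1B.le
      linarith
    · exact Real.sqrt_pos.2 (div_pos (hn t) hnw0)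
  have hc1 : c < 1 := hratio
  have h1c : (0:ℝ) < 1 - c := by linarith
  -- sqrt vw ≤ c * sqrt (s t / n t)
  have hσ : Real.sqrt vw ≤ c * Real.sqrt (s t / n t) := by
    have hsq : (c * Real.sqrt (s t / n t)) ^ 2 = s t / ((1 - B) ^ 2 * nw) := by
      rw [mul_pow, hc, mul_pow, hcB, Real.sq_sqrt (le_of_lt (div_pos (hn t) hnw0)),
        Real.sq_sqrt hst0.le, div_pow, one_pow, div_mul_div_comm, div_mul_div_comm,
        one_mul]
      rw [div_eq_div_iff (mul_pos (mul_pos (pow_pos h1B 2) hnw0) (hn t)).ne'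
        (mul_pos (pow_pos h1B 2) hnw0).ne']
      ring
    have hle : vw ≤ (c * Real.sqrt (s t / n t)) ^ 2 := by
      rw [hsq]
      refine hvub.trans ?_
      apply div_le_div_of_nonneg_left (hs t).le (mul_pos (pow_pos h1B 2) hnw0)
      nlinarith [mul_nonneg (mul_nonneg hB0 h1B.le) hnw0.le]
    calc Real.sqrt vw ≤ Real.sqrt ((c * Real.sqrt (s t / n t)) ^ 2) := Real.sqrt_le_sqrt hle
      _ = c * Real.sqrt (s t / n t) :=
        Real.sqrt_sq (mul_nonneg hc0.le (Real.sqrt_nonneg _))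
  -- the radius
  set r := lam * (μ * f t) with hr
  have hlam' : ρf ≤ lam * (1 - c) := by
    have := hlam
    rw [div_le_iff₀ h1c] at this
    linarith
  have hlam0 : 0 ≤ lam := le_trans (div_nonneg hρf0 h1c.le) hlam
  have hr0 : 0 ≤ r := mul_nonneg hlam0 (mul_pos hμ (hf t)).le
  have hrc : c * r ≤ r - |mw - μ * f t| := by
    nlinarith [mul_pos hμ (hf t),
      mul_le_mul_of_nonneg_right hlam' (mul_pos hμ (hf t)).le]
  have hkey : r / Real.sqrt (s t / n t) ≤ (r - |mw - μ * f t|) / Real.sqrt vw := by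
    have hσw0 : 0 < Real.sqrt vw := Real.sqrt_pos.2 hvw0
    have hσ00 : 0 < Real.sqrt (s t / n t) := Real.sqrt_pos.2 hst0
    have h1 : r / Real.sqrt (s t / n t) = (c * r) / (c * Real.sqrt (s t / n t)) := by
      rw [mul_div_mul_left _ _ hc0.ne']
    rw [h1]
    calc (c * r) / (c * Real.sqrt (s t / n t)) ≤ (c * r) / Real.sqrt vw :=
          div_le_div_of_nonneg_left (mul_nonneg hc0.le hr0) hσw0 hσ
      _ ≤ (r - |mw - μ * f t|) / Real.sqrt vw :=
          div_le_div_of_nonneg_right hrc hσw0.le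
  have hsets : {x : ℝ | |x / μ - f t| ≥ lam * f t} = {x : ℝ | r ≤ |x - μ * f t|} := by
    ext x
    simp only [Set.mem_setOf_eq, ge_iff_le]
    rw [show x / μ - f t = (x - μ * f t) / μ by field_simp, abs_div, abs_of_pos hμ,
      le_div_iff₀ hμ, show lam * f t * μ = r by rw [hr]; ring]
  rw [hsets]
  exact gaussian_tail_comp mw (μ * f t) vw (s t / n t) r hvw0 hst0 hkey
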